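/- arXiv:2403.12620 — 5 statements merged into one kernel-verified Lean document; each statement's English description precedes it below -/
import Mathlib

section
/- Let a, b ∈ ℝ, σ₁ > 0, σ₂ > 0, and ω ∈ ℝ. With respect to the product measure N(a, σ₁²) ⊗ N(b, σ₁²) ⊗ Exp(1/(2σ₂²)) on ℝ² × [0, ∞), the characteristic function of T = x² + y² − u satisfies ∫ exp(i ω (x² + y² − u)) dμ(x, y, u) = exp(i ω (a² + b²)/(1 − 2iωσ₁²)) / ((1 − 2iωσ₁²)(1 + 2iωσ₂²)). -/
open MeasureTheory ProbabilityTheory Complex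

open Real Set Filter
open scoped ENNReal NNReal

-- conversion of withDensity-ofReal integral
lemma integral_withDensity_ofReal' {f : ℝ → ℝ} (hf : Measurable f) (hf0 : ∀ x, 0 ≤ f x)
    (g : ℝ → ℂ) :
    ∫ x, g x ∂(volume.withDensity fun x => ENNReal.ofReal (f x))
      = ∫ x, (f x : ℂ) * g x := by
  have : (fun x => ENNReal.ofReal (f x)) = fun x => ((f x).toNNReal : ℝ≥0∞) := rfl
  rw [this, integral_withDensity_eq_integral_smul hf.real_toNNReal]
  congr 1 with x
  rw [NNReal.smul_def, Real.coe_toNNReal _ (hf0 x)]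
  simp [Complex.real_smul]

lemma integral_Ioi_cexp_neg {c : ℂ} (hc : 0 < c.re) :
    ∫ x : ℝ in Ioi 0, Complex.exp (-(c * x)) = 1 / c := by
  have hc0 : c ≠ 0 := fun h => by simp [h] at hc
  have hderiv : ∀ x ∈ Ici (0:ℝ),
      HasDerivAt (fun x : ℝ => -Complex.exp (-(c * x)) / c) (Complex.exp (-(c * x))) x := by
    intro x _
    have h1 : HasDerivAt (fun x : ℝ => -(c * x)) (-c) x := by
      simpa using ((hasDerivAt_id x).ofReal_comp.const_mul (-c))
    have h2 := (Complex.hasDerivAt_exp (-(c * x))).comp x h1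
    have h3 := h2.div_const c
    have h4 := h3.neg
    convert h4 using 1
    · ext y; simp [Function.comp, neg_div]
    · ext y; simp [Function.comp, neg_div]
    · rw [mul_neg, neg_div, neg_neg, mul_div_assoc, div_self hc0, mul_one]
  have hint : IntegrableOn (fun x : ℝ => Complex.exp (-(c * x))) (Ioi 0) := by
    refine (exp_neg_integrableOn_Ioi 0 hc).mono' ?_ ?_
    · exact (Complex.continuous_exp.comp (by continuity)).aestronglyMeasurable
    · filter_upwards with x
      rw [Complex.norm_exp]
      simp [mul_comm]
  have htend : Tendsto (fun x : ℝ => -Complex.exp (-(c * x)) / c) atTop (nhds 0) := by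
    have : Tendsto (fun x : ℝ => Complex.exp (-(c * x))) atTop (nhds 0) := by
      rw [tendsto_zero_iff_norm_tendsto_zero]
      have : ∀ x : ℝ, ‖Complex.exp (-(c * x))‖ = Real.exp (-(c.re * x)) := by
        intro x; rw [Complex.norm_exp]; simp
      simp_rw [this]
      exact Real.tendsto_exp_atBot.comp (tendsto_neg_atTop_atBot.comp (tendsto_id.const_mul_atTop hc))
    simpa using (this.neg.div_const c)
  have := integral_Ioi_of_hasDerivAt_of_tendsto' hderiv hint htend
  rw [this]
  simp [div_eq_mul_inv, one_div]

lemma exp_factor (r ω : ℝ) (hr : 0 < r) :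
    ∫ u : ℝ, Complex.exp (-(Complex.I * ω * u)) ∂expMeasure r
      = r / (r + Complex.I * ω) := by
  rw [expMeasure, gammaMeasure, show gammaPDF 1 r = fun x => ENNReal.ofReal (gammaPDFReal 1 r x) from rfl]
  rw [integral_withDensity_ofReal' (measurable_gammaPDFReal 1 r)
      (gammaPDFReal_nonneg zero_lt_one hr) _]
  have hpdf : ∀ x : ℝ, gammaPDFReal 1 r x = if 0 ≤ x then r * Real.exp (-(r * x)) else 0 := by
    intro x
    simp [gammaPDFReal, Real.Gamma_one]
  have : (fun x : ℝ => (gammaPDFReal 1 r x : ℂ) * Complex.exp (-(Complex.I * ω * x)))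
      = Set.indicator (Set.Ici 0) (fun x : ℝ => (r : ℂ) * Complex.exp (-((r + Complex.I * ω) * x))) := by
    ext x
    simp only [Set.indicator_apply, Set.mem_Ici]
    by_cases hx : 0 ≤ x
    · rw [hpdf x]
      simp only [hx, if_true]
      push_cast [Complex.ofReal_exp]
      rw [mul_assoc, ← Complex.exp_add]
      ring_nf
    · simp [hpdf x, hx]
  rw [this, integral_indicator measurableSet_Ici, integral_Ici_eq_integral_Ioi,
    integral_const_mul, integral_Ioi_cexp_neg (by simpa using hr)]
  rw [mul_one_div]

lemma gauss_factor (m σ ω : ℝ) (hσ : 0 < σ) :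
    ∫ x : ℝ, Complex.exp (Complex.I * ω * (x:ℂ)^2) ∂gaussianReal m (σ^2).toNNReal
      = ((2*π*σ^2 : ℂ) / (1 - 2*Complex.I*ω*σ^2)) ^ (1/2 : ℂ) *
        Complex.exp (Complex.I * ω * m^2 / (1 - 2*Complex.I*ω*σ^2)) /
          (Real.sqrt (2*π*σ^2) : ℂ) := by
  have hs : (0:ℝ) < σ^2 := by positivity
  have hvne : ((σ^2).toNNReal : ℝ≥0) ≠ 0 := by
    simp [Real.toNNReal_eq_zero, not_le, hs, hσ.ne']
  have hcoe : (((σ^2).toNNReal : ℝ≥0) : ℝ) = σ^2 := Real.coe_toNNReal _ hs.le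
  set B : ℂ := Complex.I*ω - (1/(2*σ^2) : ℝ) with hB
  set C : ℂ := ((m/σ^2 : ℝ) : ℂ) with hC
  set D : ℂ := ((-(m^2)/(2*σ^2) : ℝ) : ℂ) with hD
  have hBre : B.re < 0 := by
    simp only [hB, Complex.sub_re, Complex.mul_re, Complex.I_re, Complex.ofReal_re,
      Complex.I_im, Complex.ofReal_im, Complex.ofReal_re]
    norm_num
    positivity
  have hBne : B ≠ 0 := fun h => by rw [h] at hBre; simp at hBre
  have hcast : ((σ:ℂ))^2 = ((σ^2:ℝ):ℂ) := by push_cast; ring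
  have hk : (1 - 2*Complex.I*ω*σ^2 : ℂ) ≠ 0 := by
    have he : (1 - 2*Complex.I*ω*σ^2 : ℂ) = Complex.ofReal 1 - Complex.ofReal (2*ω*σ^2) * Complex.I := by
      rw [hcast]; push_cast; ring
    rw [he]
    intro h
    have := congrArg Complex.re h
    simp [pow_two] at this
  have hσ0 : (σ:ℂ) ≠ 0 := by exact_mod_cast hσ.ne'
  have hσc : ((σ:ℂ))^2 ≠ 0 := by
    simp [pow_eq_zero_iff]
    exact_mod_cast hσ.ne'
  rw [gaussianReal_of_var_ne_zero _ hvne,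
    show gaussianPDF m (σ^2).toNNReal = fun x => ENNReal.ofReal (gaussianPDFReal m (σ^2).toNNReal x) from rfl,
    integral_withDensity_ofReal' (measurable_gaussianPDFReal _ _)
      (gaussianPDFReal_nonneg _ _) _]
  have key : ∀ x : ℝ, ((gaussianPDFReal m (σ^2).toNNReal x : ℝ) : ℂ)
        * Complex.exp (Complex.I * ω * (x:ℂ)^2)
      = (Real.sqrt (2*π*σ^2) : ℂ)⁻¹ * Complex.exp (B * x^2 + C * x + D) := by
    intro x
    rw [gaussianPDFReal, hcoe]
    push_cast [Complex.ofReal_exp]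
    rw [mul_assoc, ← Complex.exp_add]
    congr 2
    rw [hB, hC, hD]
    push_cast
    field_simp
    ring
  simp_rw [key]
  rw [integral_const_mul, integral_cexp_quadratic hBre C D]
  have hnegB : (-B : ℂ) ≠ 0 := neg_ne_zero.mpr hBne
  have h1 : ((π:ℂ) / -B) = (2*π*σ^2 : ℂ) / (1 - 2*Complex.I*ω*σ^2) := by
    rw [div_eq_div_iff hnegB hk, hB]
    push_cast
    field_simp
    ring
  have h4B : (4*B:ℂ) ≠ 0 := mul_ne_zero (by norm_num) hBne
  have h2 : D - C^2/(4*B) = Complex.I * ω * m^2 / (1 - 2*Complex.I*ω*σ^2) := by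
    rw [show D - C^2/(4*B) = (D*(4*B) - C^2)/(4*B) from by field_simp,
      div_eq_div_iff h4B hk, hB, hC, hD]
    push_cast
    field_simp
    ring
  rw [h1, h2]
  ring

/-- Characteristic function of `T = x² + y² - u`, the difference between a scaled
noncentral χ²(2) statistic (built from two Gaussians) and an independent exponential
(scaled central χ²(2)) variable:
`∫ exp(iω(x²+y²-u)) dμ = exp(iω(a²+b²)/(1-2iωσ₁²)) / ((1-2iωσ₁²)(1+2iωσ₂²))`. -/
theorem diff_chiSq_charFun (a b σ₁ σ₂ ω : ℝ) (hσ₁ : 0 < σ₁) (hσ₂ : 0 < σ₂) :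
    ∫ p : (ℝ × ℝ) × ℝ,
        Complex.exp (Complex.I * (ω : ℂ) * ((p.1.1 ^ 2 + p.1.2 ^ 2 - p.2 : ℝ) : ℂ))
        ∂(((gaussianReal a (σ₁ ^ 2).toNNReal).prod (gaussianReal b (σ₁ ^ 2).toNNReal)).prod
            (expMeasure (1 / (2 * σ₂ ^ 2)))) =
      Complex.exp (Complex.I * (ω : ℂ) * ((a : ℂ) ^ 2 + (b : ℂ) ^ 2) /
          (1 - 2 * Complex.I * (ω : ℂ) * ((σ₁ : ℂ) ^ 2))) /
        ((1 - 2 * Complex.I * (ω : ℂ) * ((σ₁ : ℂ) ^ 2)) *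
          (1 + 2 * Complex.I * (ω : ℂ) * ((σ₂ : ℂ) ^ 2))) := by
  have hr : (0:ℝ) < 1 / (2 * σ₂ ^ 2) := by positivity
  haveI : IsProbabilityMeasure (expMeasure (1 / (2 * σ₂ ^ 2))) :=
    isProbabilityMeasure_expMeasure hr
  have hk₁ : (1 - 2*Complex.I*ω*(σ₁:ℂ)^2 : ℂ) ≠ 0 := by
    have he : (1 - 2*Complex.I*ω*(σ₁:ℂ)^2 : ℂ)
        = Complex.ofReal 1 - Complex.ofReal (2*ω*σ₁^2) * Complex.I := by push_cast; ring
    rw [he]; intro h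
    have := congrArg Complex.re h
    simp [pow_two] at this
  have hk₂ : (1 + 2*Complex.I*ω*(σ₂:ℂ)^2 : ℂ) ≠ 0 := by
    have he : (1 + 2*Complex.I*ω*(σ₂:ℂ)^2 : ℂ)
        = Complex.ofReal 1 + Complex.ofReal (2*ω*σ₂^2) * Complex.I := by push_cast; ring
    rw [he]; intro h
    have := congrArg Complex.re h
    simp [pow_two] at this
  have hsplit : ∀ p : (ℝ × ℝ) × ℝ,
      Complex.exp (Complex.I * (ω : ℂ) * ((p.1.1 ^ 2 + p.1.2 ^ 2 - p.2 : ℝ) : ℂ))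
        = (fun q : ℝ × ℝ =>
            Complex.exp (Complex.I * ω * (q.1:ℂ)^2) * Complex.exp (Complex.I * ω * (q.2:ℂ)^2)) p.1
          * (fun u : ℝ => Complex.exp (-(Complex.I * ω * (u:ℂ)))) p.2 := by
    intro p
    dsimp only
    rw [← Complex.exp_add, ← Complex.exp_add]
    push_cast
    ring_nf
  rw [MeasureTheory.integral_congr_ae (MeasureTheory.ae_of_all _ hsplit),
    MeasureTheory.integral_prod_mul (f := fun q : ℝ × ℝ =>
      Complex.exp (Complex.I * ω * (q.1:ℂ)^2) * Complex.exp (Complex.I * ω * (q.2:ℂ)^2))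
      (g := fun u : ℝ => Complex.exp (-(Complex.I * ω * (u:ℂ)))),
    MeasureTheory.integral_prod_mul (f := fun x : ℝ => Complex.exp (Complex.I * ω * (x:ℂ)^2))
      (g := fun y : ℝ => Complex.exp (Complex.I * ω * (y:ℂ)^2))]
  rw [gauss_factor a σ₁ ω hσ₁, gauss_factor b σ₁ ω hσ₁, exp_factor _ ω hr]
  set S : ℂ := ((2*π*σ₁^2 : ℂ) / (1 - 2*Complex.I*ω*(σ₁:ℂ)^2)) ^ (1/2 : ℂ) with hS
  set Q : ℂ := (Real.sqrt (2*π*σ₁^2) : ℂ) with hQ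
  have hsq : (0:ℝ) < 2*π*σ₁^2 := by positivity
  have hzne : ((2*π*σ₁^2 : ℂ) / (1 - 2*Complex.I*ω*(σ₁:ℂ)^2)) ≠ 0 := by
    apply div_ne_zero _ hk₁
    push_cast
    exact_mod_cast (by exact_mod_cast hsq.ne' : ((2*π*σ₁^2 : ℝ):ℂ) ≠ 0)
  have hS2 : S * S = (2*π*σ₁^2 : ℂ) / (1 - 2*Complex.I*ω*(σ₁:ℂ)^2) := by
    rw [hS, ← Complex.cpow_add _ _ hzne]
    norm_num
  have hQ2 : Q * Q = (2*π*σ₁^2 : ℂ) := by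
    rw [hQ, ← Complex.ofReal_mul, Real.mul_self_sqrt hsq.le]
    push_cast
    ring
  have hE : Complex.exp (Complex.I * ω * (a:ℂ)^2 / (1 - 2*Complex.I*ω*(σ₁:ℂ)^2))
        * Complex.exp (Complex.I * ω * (b:ℂ)^2 / (1 - 2*Complex.I*ω*(σ₁:ℂ)^2))
      = Complex.exp (Complex.I * (ω : ℂ) * ((a : ℂ) ^ 2 + (b : ℂ) ^ 2) /
          (1 - 2 * Complex.I * (ω : ℂ) * ((σ₁ : ℂ) ^ 2)) ) := by
    rw [← Complex.exp_add, ← add_div]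
    ring_nf
  have hrpart : ((1 / (2 * σ₂ ^ 2) : ℝ) : ℂ) / (((1 / (2 * σ₂ ^ 2) : ℝ) : ℂ) + Complex.I * ω)
      = 1 / (1 + 2*Complex.I*ω*(σ₂:ℂ)^2) := by
    have hden : (((1 / (2 * σ₂ ^ 2) : ℝ) : ℂ) + Complex.I * ω) ≠ 0 := by
      intro h
      have h1 : (((1 / (2 * σ₂ ^ 2) : ℝ) : ℂ) + Complex.I * ↑ω).re = 0 := by rw [h]; simp
      simp only [Complex.add_re, Complex.ofReal_re, Complex.mul_re, Complex.I_re, Complex.I_im,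
        Complex.ofReal_im, Complex.ofReal_re] at h1
      norm_num at h1
      exact absurd h1 (by positivity)
    rw [div_eq_div_iff hden hk₂]
    have hσc : ((σ₂:ℂ))^2 ≠ 0 := by
      have : (σ₂:ℂ) ≠ 0 := by exact_mod_cast hσ₂.ne'
      exact pow_ne_zero 2 this
    push_cast
    field_simp [Complex.ofReal_ne_zero.mpr hσ₂.ne']
  rw [hrpart]
  have hQne : Q ≠ 0 := by
    rw [hQ]
    exact_mod_cast (Real.sqrt_pos.mpr hsq).ne'
  calc S * Complex.exp (Complex.I * ω * (a:ℂ)^2 / (1 - 2*Complex.I*ω*(σ₁:ℂ)^2)) / Q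
        * (S * Complex.exp (Complex.I * ω * (b:ℂ)^2 / (1 - 2*Complex.I*ω*(σ₁:ℂ)^2)) / Q)
        * (1 / (1 + 2*Complex.I*ω*(σ₂:ℂ)^2))
      = (S*S) / (Q*Q) * (Complex.exp (Complex.I * ω * (a:ℂ)^2 / (1 - 2*Complex.I*ω*(σ₁:ℂ)^2))
          * Complex.exp (Complex.I * ω * (b:ℂ)^2 / (1 - 2*Complex.I*ω*(σ₁:ℂ)^2)))
          * (1 / (1 + 2*Complex.I*ω*(σ₂:ℂ)^2)) := by ring
    _ = _ := by
        rw [hS2, hQ2, hE]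
        have h2πσ : ((2*π*σ₁^2 : ℝ):ℂ) ≠ 0 := by exact_mod_cast hsq.ne'
        push_cast at h2πσ ⊢
        field_simp [Complex.ofReal_ne_zero.mpr hσ₁.ne']
end

section
/- Let a, b ∈ ℝ, σ₁ > 0, σ₂ > 0, and let μ = N(a, σ₁²) ⊗ N(b, σ₁²) ⊗ Exp(1/(2σ₂²)) on ℝ² × [0, ∞). Then for every t ≤ 0, μ{(x, y, u) : x² + y² − u ≤ t} = (σ₂²/(σ₁² + σ₂²)) · exp(t/(2σ₂²)) · exp(−(a² + b²)/(2(σ₁² + σ₂²))). -/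
open MeasureTheory ProbabilityTheory Real

lemma exp_measure_Ici {r : ℝ} (hr : 0 < r) {s : ℝ} (hs : 0 ≤ s) :
    expMeasure r (Set.Ici s) = ENNReal.ofReal (Real.exp (-(r * s))) := by
  have hprob : IsProbabilityMeasure (expMeasure r) := isProbabilityMeasure_expMeasure hr
  have hsing : expMeasure r {s} = 0 := by
    rw [expMeasure, gammaMeasure]
    exact (withDensity_absolutelyContinuous _ _) (measure_singleton s)
  have hIic : expMeasure r (Set.Iic s) = ENNReal.ofReal (1 - Real.exp (-(r * s))) := by
    have h := lintegral_exponentialPDF_eq_antiDeriv hr s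
    rw [if_pos hs] at h
    rw [expMeasure, gammaMeasure, withDensity_apply _ measurableSet_Iic]
    exact h
  have hIio : expMeasure r (Set.Iio s) = ENNReal.ofReal (1 - Real.exp (-(r * s))) := by
    rw [← hIic, ← Set.Iio_union_Icc_eq_Iic (le_refl s), Set.Icc_self,
      measure_union (Set.disjoint_singleton_right.mpr (by simp)) (measurableSet_singleton s),
      hsing, add_zero]
  have he1 : Real.exp (-(r * s)) ≤ 1 := by
    rw [Real.exp_le_one_iff]
    nlinarith
  rw [← Set.compl_Iio, measure_compl measurableSet_Iio (measure_ne_top _ _), hIio,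
    measure_univ, ← ENNReal.ofReal_one, ← ENNReal.ofReal_sub _ (by linarith)]
  norm_num

lemma gaussianPDFReal_mul_exp (m σ₁ σ₂ x : ℝ) (h1 : 0 < σ₁) (h2 : 0 < σ₂) :
    gaussianPDFReal m (σ₁ ^ 2).toNNReal x * Real.exp (-x ^ 2 / (2 * σ₂ ^ 2)) =
      (σ₂ / Real.sqrt (σ₁ ^ 2 + σ₂ ^ 2) * Real.exp (-m ^ 2 / (2 * (σ₁ ^ 2 + σ₂ ^ 2)))) *
      gaussianPDFReal (m * σ₂ ^ 2 / (σ₁ ^ 2 + σ₂ ^ 2))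
        (σ₁ ^ 2 * σ₂ ^ 2 / (σ₁ ^ 2 + σ₂ ^ 2)).toNNReal x := by
  have hs : 0 < σ₁ ^ 2 + σ₂ ^ 2 := by positivity
  have hsqrtS : 0 < Real.sqrt (σ₁ ^ 2 + σ₂ ^ 2) := Real.sqrt_pos.mpr hs
  have h2pi : 0 < Real.sqrt (2 * π) := Real.sqrt_pos.mpr (by positivity)
  have hc1 : ((σ₁ ^ 2).toNNReal : ℝ) = σ₁ ^ 2 := Real.coe_toNNReal _ (by positivity)
  have hc2 : ((σ₁ ^ 2 * σ₂ ^ 2 / (σ₁ ^ 2 + σ₂ ^ 2)).toNNReal : ℝ)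
      = σ₁ ^ 2 * σ₂ ^ 2 / (σ₁ ^ 2 + σ₂ ^ 2) := Real.coe_toNNReal _ (by positivity)
  simp only [gaussianPDFReal, hc1, hc2]
  have hsqrt1 : Real.sqrt (2 * π * (σ₁ ^ 2)) = Real.sqrt (2 * π) * σ₁ := by
    rw [Real.sqrt_mul (by positivity), Real.sqrt_sq h1.le]
  have hsqrt2 : Real.sqrt (2 * π * (σ₁ ^ 2 * σ₂ ^ 2 / (σ₁ ^ 2 + σ₂ ^ 2)))
      = Real.sqrt (2 * π) * (σ₁ * σ₂ / Real.sqrt (σ₁ ^ 2 + σ₂ ^ 2)) := by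
    have harg : σ₁ ^ 2 * σ₂ ^ 2 / (σ₁ ^ 2 + σ₂ ^ 2)
        = (σ₁ * σ₂ / Real.sqrt (σ₁ ^ 2 + σ₂ ^ 2)) ^ 2 := by
      rw [div_pow, mul_pow, Real.sq_sqrt hs.le]
    rw [harg, Real.sqrt_mul (by positivity), Real.sqrt_sq (by positivity)]
  rw [hsqrt1, hsqrt2]
  have hexp : ∀ c1 c2 p q : ℝ, c1 = c2 → p = q → c1 * Real.exp p = c2 * Real.exp q := by
    intro c1 c2 p q h h'; rw [h, h']
  calc (Real.sqrt (2 * π) * σ₁)⁻¹ * Real.exp (-(x - m) ^ 2 / (2 * ↑(σ₁ ^ 2))) *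
        Real.exp (-x ^ 2 / (2 * σ₂ ^ 2))
      = (Real.sqrt (2 * π) * σ₁)⁻¹ *
          Real.exp (-(x - m) ^ 2 / (2 * σ₁ ^ 2) + -x ^ 2 / (2 * σ₂ ^ 2)) := by
        rw [Real.exp_add]; ring
    _ = (σ₂ / Real.sqrt (σ₁ ^ 2 + σ₂ ^ 2) *
          (Real.sqrt (2 * π) * (σ₁ * σ₂ / Real.sqrt (σ₁ ^ 2 + σ₂ ^ 2)))⁻¹) *
          Real.exp (-m ^ 2 / (2 * (σ₁ ^ 2 + σ₂ ^ 2)) +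
            -(x - m * σ₂ ^ 2 / (σ₁ ^ 2 + σ₂ ^ 2)) ^ 2 /
              (2 * (σ₁ ^ 2 * σ₂ ^ 2 / (σ₁ ^ 2 + σ₂ ^ 2)))) := by
        apply hexp
        · field_simp
        · field_simp
          ring
    _ = σ₂ / Real.sqrt (σ₁ ^ 2 + σ₂ ^ 2) * Real.exp (-m ^ 2 / (2 * (σ₁ ^ 2 + σ₂ ^ 2))) *
        ((Real.sqrt (2 * π) * (σ₁ * σ₂ / Real.sqrt (σ₁ ^ 2 + σ₂ ^ 2)))⁻¹ *
          Real.exp (-(x - m * σ₂ ^ 2 / (σ₁ ^ 2 + σ₂ ^ 2)) ^ 2 /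
            (2 * (σ₁ ^ 2 * σ₂ ^ 2 / (σ₁ ^ 2 + σ₂ ^ 2))))) := by
        rw [Real.exp_add]; ring

lemma gauss_lintegral_exp (m σ₁ σ₂ : ℝ) (h1 : 0 < σ₁) (h2 : 0 < σ₂) :
    ∫⁻ x, ENNReal.ofReal (Real.exp (-x ^ 2 / (2 * σ₂ ^ 2))) ∂(gaussianReal m (σ₁ ^ 2).toNNReal)
      = ENNReal.ofReal (σ₂ / Real.sqrt (σ₁ ^ 2 + σ₂ ^ 2) *
          Real.exp (-m ^ 2 / (2 * (σ₁ ^ 2 + σ₂ ^ 2)))) := by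
  have hs : 0 < σ₁ ^ 2 + σ₂ ^ 2 := by positivity
  have hv : (σ₁ ^ 2).toNNReal ≠ 0 := by
    intro h
    have := Real.toNNReal_eq_zero.mp h
    nlinarith
  have hv' : (σ₁ ^ 2 * σ₂ ^ 2 / (σ₁ ^ 2 + σ₂ ^ 2)).toNNReal ≠ 0 := by
    intro h
    have := Real.toNNReal_eq_zero.mp h
    have : 0 < σ₁ ^ 2 * σ₂ ^ 2 / (σ₁ ^ 2 + σ₂ ^ 2) := by positivity
    linarith
  have hC : 0 ≤ σ₂ / Real.sqrt (σ₁ ^ 2 + σ₂ ^ 2) *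
      Real.exp (-m ^ 2 / (2 * (σ₁ ^ 2 + σ₂ ^ 2))) := by positivity
  rw [gaussianReal_of_var_ne_zero _ hv,
    lintegral_withDensity_eq_lintegral_mul _ (measurable_gaussianPDF _ _)
      (by fun_prop : Measurable fun x : ℝ ↦ ENNReal.ofReal (Real.exp (-x ^ 2 / (2 * σ₂ ^ 2))))]
  simp only [Pi.mul_apply, gaussianPDF_def]
  calc ∫⁻ x, ENNReal.ofReal (gaussianPDFReal m (σ₁ ^ 2).toNNReal x) *
        ENNReal.ofReal (Real.exp (-x ^ 2 / (2 * σ₂ ^ 2)))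
      = ∫⁻ x, ENNReal.ofReal (σ₂ / Real.sqrt (σ₁ ^ 2 + σ₂ ^ 2) *
          Real.exp (-m ^ 2 / (2 * (σ₁ ^ 2 + σ₂ ^ 2)))) *
          ENNReal.ofReal (gaussianPDFReal (m * σ₂ ^ 2 / (σ₁ ^ 2 + σ₂ ^ 2))
            (σ₁ ^ 2 * σ₂ ^ 2 / (σ₁ ^ 2 + σ₂ ^ 2)).toNNReal x) := by
        refine lintegral_congr fun x ↦ ?_
        rw [← ENNReal.ofReal_mul (gaussianPDFReal_nonneg _ _ _),
          ← ENNReal.ofReal_mul hC, gaussianPDFReal_mul_exp m σ₁ σ₂ x h1 h2]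
    _ = ENNReal.ofReal (σ₂ / Real.sqrt (σ₁ ^ 2 + σ₂ ^ 2) *
          Real.exp (-m ^ 2 / (2 * (σ₁ ^ 2 + σ₂ ^ 2)))) := by
        rw [lintegral_const_mul _ ((measurable_gaussianPDFReal _ _).ennreal_ofReal),
          lintegral_gaussianPDFReal_eq_one _ hv', mul_one]

/-- Negative-tail CDF of the difference `T = x² + y² - u` between a scaled noncentral
χ²(2) statistic and an independent exponential variable: for `t ≤ 0`,
`μ{T ≤ t} = (σ₂²/(σ₁²+σ₂²)) · e^{t/(2σ₂²)} · e^{-(a²+b²)/(2(σ₁²+σ₂²))}`. -/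
theorem diff_chiSq_neg_tail_cdf (a b σ₁ σ₂ : ℝ) (hσ₁ : 0 < σ₁) (hσ₂ : 0 < σ₂)
    (t : ℝ) (ht : t ≤ 0) :
    (((gaussianReal a (σ₁ ^ 2).toNNReal).prod (gaussianReal b (σ₁ ^ 2).toNNReal)).prod
        (expMeasure (1 / (2 * σ₂ ^ 2))))
      {p : (ℝ × ℝ) × ℝ | p.1.1 ^ 2 + p.1.2 ^ 2 - p.2 ≤ t} =
      ENNReal.ofReal ((σ₂ ^ 2 / (σ₁ ^ 2 + σ₂ ^ 2)) * Real.exp (t / (2 * σ₂ ^ 2)) *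
        Real.exp (-(a ^ 2 + b ^ 2) / (2 * (σ₁ ^ 2 + σ₂ ^ 2)))) := by
  have hs : 0 < σ₁ ^ 2 + σ₂ ^ 2 := by positivity
  have hr : (0 : ℝ) < 1 / (2 * σ₂ ^ 2) := by positivity
  set r : ℝ := 1 / (2 * σ₂ ^ 2) with hr_def
  haveI : IsProbabilityMeasure (expMeasure r) := isProbabilityMeasure_expMeasure hr
  have hS : MeasurableSet {p : (ℝ × ℝ) × ℝ | p.1.1 ^ 2 + p.1.2 ^ 2 - p.2 ≤ t} := by
    apply measurableSet_le _ measurable_const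
    fun_prop
  rw [Measure.prod_apply hS]
  have hinner : ∀ xy : ℝ × ℝ,
      expMeasure r (Prod.mk xy ⁻¹' {p : (ℝ × ℝ) × ℝ | p.1.1 ^ 2 + p.1.2 ^ 2 - p.2 ≤ t})
      = ENNReal.ofReal (Real.exp (t * r)) *
        (ENNReal.ofReal (Real.exp (-xy.1 ^ 2 / (2 * σ₂ ^ 2))) *
         ENNReal.ofReal (Real.exp (-xy.2 ^ 2 / (2 * σ₂ ^ 2)))) := by
    intro xy
    have hset : (Prod.mk xy ⁻¹' {p : (ℝ × ℝ) × ℝ | p.1.1 ^ 2 + p.1.2 ^ 2 - p.2 ≤ t})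
        = Set.Ici (xy.1 ^ 2 + xy.2 ^ 2 - t) := by
      ext u
      simp only [Set.mem_preimage, Set.mem_setOf_eq, Set.mem_Ici]
      constructor <;> intro h <;> linarith
    rw [hset, exp_measure_Ici hr (by nlinarith [sq_nonneg xy.1, sq_nonneg xy.2])]
    rw [← ENNReal.ofReal_mul (by positivity), ← ENNReal.ofReal_mul (by positivity),
      ← Real.exp_add, ← Real.exp_add]
    congr 1
    rw [hr_def]
    field_simp
    ring
  rw [lintegral_congr hinner, lintegral_const_mul _ (by fun_prop)]
  have hpm := lintegral_prod_mul (μ := gaussianReal a (σ₁ ^ 2).toNNReal)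
    (ν := gaussianReal b (σ₁ ^ 2).toNNReal)
    (f := fun x : ℝ ↦ ENNReal.ofReal (Real.exp (-x ^ 2 / (2 * σ₂ ^ 2))))
    (g := fun y : ℝ ↦ ENNReal.ofReal (Real.exp (-y ^ 2 / (2 * σ₂ ^ 2))))
    (by fun_prop) (by fun_prop)
  rw [hpm, gauss_lintegral_exp a σ₁ σ₂ hσ₁ hσ₂, gauss_lintegral_exp b σ₁ σ₂ hσ₁ hσ₂,
    ← ENNReal.ofReal_mul (by positivity), ← ENNReal.ofReal_mul (by positivity)]
  congr 1
  have hss : Real.sqrt (σ₁ ^ 2 + σ₂ ^ 2) * Real.sqrt (σ₁ ^ 2 + σ₂ ^ 2) = σ₁ ^ 2 + σ₂ ^ 2 :=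
    Real.mul_self_sqrt hs.le
  have ht' : t * r = t / (2 * σ₂ ^ 2) := by rw [hr_def]; field_simp
  have hsplit : Real.exp (-(a ^ 2 + b ^ 2) / (2 * (σ₁ ^ 2 + σ₂ ^ 2)))
      = Real.exp (-a ^ 2 / (2 * (σ₁ ^ 2 + σ₂ ^ 2))) *
        Real.exp (-b ^ 2 / (2 * (σ₁ ^ 2 + σ₂ ^ 2))) := by
    rw [← Real.exp_add]
    congr 1
    ring
  have key : σ₂ / Real.sqrt (σ₁ ^ 2 + σ₂ ^ 2) * (σ₂ / Real.sqrt (σ₁ ^ 2 + σ₂ ^ 2))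
      = σ₂ ^ 2 / (σ₁ ^ 2 + σ₂ ^ 2) := by
    rw [div_mul_div_comm, hss]; ring
  rw [ht', hsplit]
  linear_combination (Real.exp (t / (2 * σ₂ ^ 2)) * Real.exp (-a ^ 2 / (2 * (σ₁ ^ 2 + σ₂ ^ 2))) *
    Real.exp (-b ^ 2 / (2 * (σ₁ ^ 2 + σ₂ ^ 2)))) * key
end

section
/- Let a, b ∈ ℝ and σ > 0. The pushforward of the product measure N(a, σ²) ⊗ N(b, σ²) under the map (x, y) ↦ x² + y² is the measure on ℝ with Lebesgue density s ↦ (1/(2σ²)) · exp(−(s + a² + b²)/(2σ²)) · I₀(√((a² + b²)·s)/σ²) for s ≥ 0 (and density 0 for s < 0). -/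
open MeasureTheory ProbabilityTheory

/-- The modified Bessel function of the first kind of order zero,
`I₀(x) = ∑_{k=0}^∞ (x/2)^(2k) / (k!)²`. -/
noncomputable def besselI0 (x : ℝ) : ℝ :=
  ∑' k : ℕ, (x / 2) ^ (2 * k) / ((Nat.factorial k : ℝ)) ^ 2

open Real Set intervalIntegral

lemma besselI0_summable (x : ℝ) :
    Summable (fun k : ℕ => (x / 2) ^ (2 * k) / ((Nat.factorial k : ℝ)) ^ 2) := by
  refine Summable.of_nonneg_of_le (fun k => by rw [pow_mul]; positivity) (fun k => ?_)
    (Real.summable_pow_div_factorial ((x/2)^2))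
  have h1 : (1:ℝ) ≤ (Nat.factorial k : ℝ) := by exact_mod_cast Nat.one_le_iff_ne_zero.mpr k.factorial_ne_zero
  rw [pow_mul]
  apply div_le_div_of_nonneg_left ?_ (by positivity) ?_ |>.trans_eq rfl
  · positivity
  · nlinarith

lemma besselI0_zero : besselI0 0 = 1 := by
  rw [besselI0, tsum_eq_single 0]
  · simp
  · intro k hk
    simp [pow_eq_zero_iff, hk, Nat.factorial_ne_zero]

lemma prod_odd_div_even (k : ℕ) :
    (∏ i ∈ Finset.range k, ((2 * (i:ℝ) + 1) / (2 * i + 2))) =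
      ((2 * k).factorial : ℝ) / (4 ^ k * ((k.factorial : ℝ)) ^ 2) := by
  induction k with
  | zero => simp
  | succ n ih =>
    rw [Finset.prod_range_succ, ih]
    have h1 : ((2 * (n + 1)).factorial : ℝ) = ((2 * n).factorial : ℝ) * (2 * n + 1) * (2 * n + 2) := by
      have : 2 * (n + 1) = (2 * n + 1) + 1 := by ring
      rw [this, Nat.factorial_succ, Nat.factorial_succ]
      push_cast; ring
    have h2 : ((n + 1).factorial : ℝ) = (n.factorial : ℝ) * (n + 1) := by
      rw [Nat.factorial_succ]; push_cast; ring
    have hf : (n.factorial : ℝ) ≠ 0 := Nat.cast_ne_zero.mpr n.factorial_ne_zero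
    rw [h1, h2]
    field_simp
    ring

lemma integral_cos_pow_even_symm (k : ℕ) :
    ∫ θ in (-π)..π, cos θ ^ (2 * k) =
      2 * (π * ∏ i ∈ Finset.range k, (2 * (i:ℝ) + 1) / (2 * i + 2)) := by
  have hper : Function.Periodic (fun θ : ℝ => sin θ ^ (2 * k)) π := by
    intro θ
    simp only [sin_add_pi]
    rw [pow_mul, pow_mul, neg_pow, neg_one_sq, one_mul]
  have hcos : ∀ θ : ℝ, cos θ ^ (2 * k) = sin (θ + π / 2) ^ (2 * k) := by
    intro θ; rw [sin_add_pi_div_two]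
  calc ∫ θ in (-π)..π, cos θ ^ (2 * k)
      = ∫ θ in (-π)..π, sin (θ + π / 2) ^ (2 * k) := by simp_rw [hcos]
    _ = ∫ θ in (-π + π/2)..(π + π/2), sin θ ^ (2 * k) :=
        integral_comp_add_right (fun θ => sin θ ^ (2*k)) (π/2)
    _ = (∫ θ in (-π + π/2)..(-π + π/2 + π), sin θ ^ (2 * k)) +
        ∫ θ in (π/2)..(π/2 + π), sin θ ^ (2 * k) := by
        rw [← integral_add_adjacent_intervals (f := fun θ => sin θ ^ (2 * k)) (a := -π + π/2) (b := π/2) (c := π + π/2)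
          ((continuous_sin.pow _).intervalIntegrable _ _)
          ((continuous_sin.pow _).intervalIntegrable _ _)]
        rw [show π + π/2 = π/2 + π by ring]
        norm_num
    _ = (∫ θ in (0:ℝ)..(0 + π), sin θ ^ (2 * k)) + ∫ θ in (0:ℝ)..(0 + π), sin θ ^ (2 * k) := by
        rw [hper.intervalIntegral_add_eq (-π + π/2) 0, hper.intervalIntegral_add_eq (π/2) 0]
    _ = 2 * (π * ∏ i ∈ Finset.range k, (2 * (i:ℝ) + 1) / (2 * i + 2)) := by
        rw [zero_add, integral_sin_pow_even]; ring

lemma integral_cos_pow_odd_symm (k : ℕ) :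
    ∫ θ in (-π)..π, cos θ ^ (2 * k + 1) = 0 := by
  have hper : Function.Periodic (fun θ : ℝ => cos θ ^ (2 * k + 1)) (2 * π) :=
    fun θ => by simp [Real.cos_add_two_pi]
  have h1 : ∫ θ in (-π)..π, cos θ ^ (2 * k + 1)
      = ∫ θ in (-π/2)..(-π/2 + 2*π), cos θ ^ (2 * k + 1) := by
    have := hper.intervalIntegral_add_eq (-π) (-π/2)
    rw [show -π + 2*π = π by ring] at this
    exact this
  have h2 : ∫ θ in (π/2)..(-π/2 + 2*π), cos θ ^ (2 * k + 1)
      = - ∫ θ in (-π/2)..(π/2), cos θ ^ (2 * k + 1) := by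
    have : ∫ θ in (-π/2)..(π/2), cos (θ + π) ^ (2 * k + 1)
        = ∫ θ in (-π/2 + π)..(π/2 + π), cos θ ^ (2 * k + 1) :=
      integral_comp_add_right (fun θ => cos θ ^ (2 * k + 1)) π
    rw [show (-π/2 + π) = π/2 by ring, show π/2 + π = -π/2 + 2*π by ring] at this
    rw [← this]
    have hodd : ∀ θ : ℝ, cos (θ + π) ^ (2 * k + 1) = -(cos θ ^ (2 * k + 1)) := by
      intro θ
      rw [Real.cos_add_pi, Odd.neg_pow ⟨k, by ring⟩]
    simp_rw [hodd]
    rw [intervalIntegral.integral_neg]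
  rw [h1, ← integral_add_adjacent_intervals (f := fun θ => cos θ ^ (2 * k + 1)) (a := -π/2) (b := π/2) (c := -π/2 + 2*π)
      ((continuous_cos.pow _).intervalIntegrable _ _)
      ((continuous_cos.pow _).intervalIntegrable _ _), h2]
  ring

set_option maxHeartbeats 1000000 in
lemma integral_exp_mul_cos_symm (R : ℝ) :
    ∫ θ in (-π)..π, Real.exp (R * Real.cos θ) = 2 * π * besselI0 R := by
  have hle : (-π : ℝ) ≤ π := by linarith [pi_pos]
  have hexp : ∀ θ : ℝ, Real.exp (R * cos θ) = ∑' n : ℕ, (R * cos θ) ^ n / n.factorial := by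
    intro θ
    rw [Real.exp_eq_exp_ℝ, NormedSpace.exp_eq_tsum_div]
  have hswap : ∫ θ in Ioc (-π) π, (∑' n : ℕ, (R * cos θ) ^ n / n.factorial) ∂volume
      = ∑' n : ℕ, ∫ θ in Ioc (-π) π, (R * cos θ) ^ n / n.factorial ∂volume := by
    apply integral_tsum
    · intro n
      exact (((continuous_const.mul continuous_cos).pow n).div_const _).aestronglyMeasurable
    · have hb : ∀ n : ℕ, ∫⁻ θ in Ioc (-π) π, ‖(R * cos θ) ^ n / n.factorial‖₊ ∂volume
          ≤ ENNReal.ofReal (|R| ^ n / n.factorial * (2 * π)) := by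
        intro n
        have hle2 : ∀ θ : ℝ, (‖(R * cos θ) ^ n / n.factorial‖₊ : ENNReal)
            ≤ ENNReal.ofReal (|R| ^ n / n.factorial) := by
          intro θ
          rw [show ((‖(R * cos θ) ^ n / n.factorial‖₊ : ENNReal)) = ENNReal.ofReal ‖(R * cos θ) ^ n / n.factorial‖ from (ofReal_norm _).symm]
          apply ENNReal.ofReal_le_ofReal
          have h1 : ‖R * cos θ‖ ≤ |R| := by
            rw [norm_mul, Real.norm_eq_abs, Real.norm_eq_abs]
            calc |R| * |cos θ| ≤ |R| * 1 :=
                  mul_le_mul_of_nonneg_left (abs_cos_le_one θ) (abs_nonneg R)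
              _ = |R| := mul_one _
          rw [norm_div, norm_pow, Real.norm_natCast]
          gcongr
        calc ∫⁻ θ in Ioc (-π) π, ‖(R * cos θ) ^ n / n.factorial‖₊ ∂volume
            ≤ ∫⁻ _ in Ioc (-π) π, ENNReal.ofReal (|R| ^ n / n.factorial) ∂volume :=
              lintegral_mono fun θ => hle2 θ
          _ = ENNReal.ofReal (|R| ^ n / n.factorial) * volume (Ioc (-π) π) := by
              rw [setLIntegral_const]
          _ = ENNReal.ofReal (|R| ^ n / n.factorial * (2 * π)) := by
              rw [Real.volume_Ioc, ← ENNReal.ofReal_mul (by positivity)]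
              norm_num
              ring_nf
      refine ne_top_of_le_ne_top ?_ (ENNReal.tsum_le_tsum hb)
      have hs : Summable (fun n : ℕ => |R| ^ n / n.factorial * (2 * π)) :=
        (Real.summable_pow_div_factorial |R|).mul_right _
      rw [← ENNReal.ofReal_tsum_of_nonneg (fun n => by positivity) hs]
      exact ENNReal.ofReal_ne_top
  have hf : ∀ n : ℕ, (∫ θ in (-π)..π, (R * cos θ) ^ n / n.factorial)
      = (R ^ n / n.factorial) * ∫ θ in (-π)..π, cos θ ^ n := by
    intro n
    simp_rw [mul_pow, mul_div_right_comm]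
    exact intervalIntegral.integral_const_mul _ _
  have h4 : ∀ k : ℕ, ((2:ℝ)) ^ (2 * k) = 4 ^ k := by
    intro k; rw [pow_mul]; norm_num
  have heven : HasSum (fun k : ℕ => (R ^ (2*k) / ((2*k).factorial : ℝ)) *
      ∫ θ in (-π)..π, cos θ ^ (2*k)) (2 * π * besselI0 R) := by
    have hval : ∀ k : ℕ, (R ^ (2*k) / ((2*k).factorial : ℝ)) * (∫ θ in (-π)..π, cos θ ^ (2*k))
        = 2 * π * ((R/2) ^ (2*k) / ((k.factorial : ℝ)) ^ 2) := by
      intro k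
      rw [integral_cos_pow_even_symm, prod_odd_div_even, div_pow, h4]
      have h2 : ((2*k).factorial : ℝ) ≠ 0 := Nat.cast_ne_zero.mpr (Nat.factorial_ne_zero _)
      have h3 : ((k.factorial : ℝ)) ≠ 0 := Nat.cast_ne_zero.mpr (Nat.factorial_ne_zero _)
      have h5 : ((4:ℝ)) ^ k ≠ 0 := by positivity
      field_simp
    simp_rw [hval]
    exact ((besselI0_summable R).hasSum).mul_left (2 * π)
  have hodd : HasSum (fun k : ℕ => (R ^ (2*k+1) / ((2*k+1).factorial : ℝ)) *
      ∫ θ in (-π)..π, cos θ ^ (2*k+1)) 0 := by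
    have : (fun k : ℕ => (R ^ (2*k+1) / ((2*k+1).factorial : ℝ)) *
        ∫ θ in (-π)..π, cos θ ^ (2*k+1)) = fun _ => (0:ℝ) := by
      funext k; rw [integral_cos_pow_odd_symm, mul_zero]
    rw [this]
    exact hasSum_zero
  calc ∫ θ in (-π)..π, Real.exp (R * cos θ)
      = ∫ θ in Ioc (-π) π, Real.exp (R * cos θ) ∂volume := intervalIntegral.integral_of_le hle
    _ = ∫ θ in Ioc (-π) π, (∑' n : ℕ, (R * cos θ) ^ n / n.factorial) ∂volume := by
        simp_rw [hexp]
    _ = ∑' n : ℕ, ∫ θ in Ioc (-π) π, (R * cos θ) ^ n / n.factorial ∂volume := hswap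
    _ = ∑' n : ℕ, ∫ θ in (-π)..π, (R * cos θ) ^ n / n.factorial := by
        simp_rw [intervalIntegral.integral_of_le hle]
    _ = ∑' n : ℕ, (R ^ n / n.factorial) * ∫ θ in (-π)..π, cos θ ^ n := by simp_rw [hf]
    _ = 2 * π * besselI0 R + 0 := (HasSum.even_add_odd heven hodd).tsum_eq
    _ = 2 * π * besselI0 R := add_zero _

lemma integral_exp_cos_add_sin (p q : ℝ) :
    ∫ θ in (-π)..π, Real.exp (p * Real.cos θ + q * Real.sin θ)
      = 2 * π * besselI0 (Real.sqrt (p ^ 2 + q ^ 2)) := by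
  by_cases hz : p = 0 ∧ q = 0
  · obtain ⟨rfl, rfl⟩ := hz
    simp [besselI0_zero]
    ring
  · have hz' : (p : ℂ) + q * Complex.I ≠ 0 := by
      intro h
      apply hz
      constructor
      · simpa using congrArg Complex.re h
      · simpa using congrArg Complex.im h
    set z : ℂ := (p : ℂ) + q * Complex.I with hzdef
    set R : ℝ := ‖z‖ with hRdef
    set φ : ℝ := Complex.arg z with hφdef
    have hR : R = Real.sqrt (p ^ 2 + q ^ 2) := by
      rw [hRdef, Complex.norm_def, hzdef, Complex.normSq_add_mul_I]
    have hRne : R ≠ 0 := by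
      rw [hRdef]; exact norm_ne_zero_iff.mpr hz'
    have hre : z.re = p := by simp [hzdef]
    have him : z.im = q := by simp [hzdef]
    have hcos : R * Real.cos φ = p := by
      rw [hφdef, Complex.cos_arg hz', hre, ← hRdef, mul_div_cancel₀ _ hRne]
    have hsin : R * Real.sin φ = q := by
      rw [hφdef, Complex.sin_arg, him, ← hRdef, mul_div_cancel₀ _ hRne]
    have hkey : ∀ θ : ℝ, p * Real.cos θ + q * Real.sin θ = R * Real.cos (θ - φ) := by
      intro θ
      rw [Real.cos_sub, ← hcos, ← hsin]
      ring
    simp_rw [hkey]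
    have hper : Function.Periodic (fun θ : ℝ => Real.exp (R * Real.cos θ)) (2 * π) := by
      intro θ; simp [Real.cos_add_two_pi]
    calc ∫ θ in (-π)..π, Real.exp (R * Real.cos (θ - φ))
        = ∫ θ in (-π - φ)..(π - φ), Real.exp (R * Real.cos θ) :=
          integral_comp_sub_right (fun θ => Real.exp (R * Real.cos θ)) φ
      _ = ∫ θ in (-π)..π, Real.exp (R * Real.cos θ) := by
          have := hper.intervalIntegral_add_eq (-π - φ) (-π)
          rw [show -π - φ + 2 * π = π - φ by ring, show -π + 2 * π = π by ring] at this
          exact this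
      _ = 2 * π * besselI0 R := integral_exp_mul_cos_symm R
      _ = 2 * π * besselI0 (Real.sqrt (p ^ 2 + q ^ 2)) := by rw [hR]

lemma lintegral_polarCoord_symm (g : ℝ × ℝ → ENNReal) :
    ∫⁻ p in polarCoord.target, ENNReal.ofReal p.1 * g (polarCoord.symm p) = ∫⁻ p, g p := by
  set B : ℝ × ℝ → ℝ × ℝ →L[ℝ] ℝ × ℝ := fun p =>
    LinearMap.toContinuousLinearMap (Matrix.toLin (Module.Basis.finTwoProd ℝ) (Module.Basis.finTwoProd ℝ)
      !![Real.cos p.2, -p.1 * Real.sin p.2; Real.sin p.2, p.1 * Real.cos p.2])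
  have A : ∀ p ∈ polarCoord.target, HasFDerivWithinAt polarCoord.symm (B p) polarCoord.target p :=
    fun p _ => (hasFDerivAt_polarCoord_symm p).hasFDerivWithinAt
  have B_det : ∀ p, (B p).det = p.1 := by
    intro p
    conv_rhs => rw [← one_mul p.1, ← cos_sq_add_sin_sq p.2]
    simp only [B, neg_mul, LinearMap.det_toContinuousLinearMap, LinearMap.det_toLin,
      Matrix.det_fin_two_of, sub_neg_eq_add]
    ring
  have hmeas : MeasurableSet polarCoord.target := polarCoord.open_target.measurableSet
  have hinj : Set.InjOn polarCoord.symm polarCoord.target :=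
    polarCoord.symm_source ▸ polarCoord.symm.injOn
  have himg : polarCoord.symm '' polarCoord.target = polarCoord.source :=
    polarCoord.symm_image_target_eq_source
  symm
  calc ∫⁻ p, g p = ∫⁻ p in polarCoord.source, g p := by
        rw [← setLIntegral_univ]
        exact (setLIntegral_congr polarCoord_source_ae_eq_univ).symm
    _ = ∫⁻ p in polarCoord.target, ENNReal.ofReal |(B p).det| * g (polarCoord.symm p) := by
        rw [← himg, lintegral_image_eq_lintegral_abs_det_fderiv_mul volume hmeas A hinj]
    _ = ∫⁻ p in polarCoord.target, ENNReal.ofReal p.1 * g (polarCoord.symm p) := by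
        apply setLIntegral_congr_fun_ae hmeas
        filter_upwards with p hp
        rw [B_det, abs_of_pos hp.1]

lemma lintegral_image_eq_lintegral_abs_deriv_mul' {s : Set ℝ} {f f' : ℝ → ℝ}
    (hs : MeasurableSet s) (hf' : ∀ x ∈ s, HasDerivWithinAt f (f' x) s x)
    (hf : Set.InjOn f s) (g : ℝ → ENNReal) :
    ∫⁻ x in f '' s, g x = ∫⁻ x in s, ENNReal.ofReal |f' x| * g (f x) := by
  simpa only [ContinuousLinearMap.det_toSpanSingleton] using
    lintegral_image_eq_lintegral_abs_det_fderiv_mul volume hs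
      (fun x hx => (hf' x hx).hasFDerivWithinAt) hf g

lemma gaussian_prod_withDensity (a b : ℝ) (v : NNReal) (hv : v ≠ 0) :
    (gaussianReal a v).prod (gaussianReal b v) =
      (volume.prod volume).withDensity
        (fun p => gaussianPDF a v p.1 * gaussianPDF b v p.2) := by
  apply Measure.prod_eq
  intro s t hs ht
  rw [withDensity_apply _ (hs.prod ht), ← Measure.prod_restrict,
    lintegral_prod_mul ((measurable_gaussianPDF a v).aemeasurable)
      ((measurable_gaussianPDF b v).aemeasurable),
    gaussianReal_apply _ hv, gaussianReal_apply _ hv]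

noncomputable def ncDens (a b σ s : ℝ) : ℝ :=
  (1 / (2 * σ ^ 2)) * Real.exp (-(s + a ^ 2 + b ^ 2) / (2 * σ ^ 2)) *
    besselI0 (Real.sqrt ((a ^ 2 + b ^ 2) * s) / σ ^ 2)

lemma radial_integral (a b σ : ℝ) (hσ : 0 < σ) (r : ℝ) (hr : 0 < r) :
    ∫ θ in (-π)..π, r * (gaussianPDFReal a (σ ^ 2).toNNReal (r * Real.cos θ) *
      gaussianPDFReal b (σ ^ 2).toNNReal (r * Real.sin θ))
    = 2 * r * ncDens a b σ (r ^ 2) := by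
  have hv : (((σ ^ 2).toNNReal) : ℝ) = σ ^ 2 := Real.coe_toNNReal _ (sq_nonneg σ)
  have hvpos : (0:ℝ) < σ ^ 2 := by positivity
  have hpt : ∀ θ : ℝ, r * (gaussianPDFReal a (σ ^ 2).toNNReal (r * Real.cos θ) *
      gaussianPDFReal b (σ ^ 2).toNNReal (r * Real.sin θ))
      = (r * (2 * π * σ ^ 2)⁻¹ * Real.exp (-(r ^ 2 + (a ^ 2 + b ^ 2)) / (2 * σ ^ 2))) *
        Real.exp ((r * a / σ ^ 2) * Real.cos θ + (r * b / σ ^ 2) * Real.sin θ) := by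
    intro θ
    rw [gaussianPDFReal, gaussianPDFReal, hv]
    have hconst : (Real.sqrt (2 * π * σ ^ 2))⁻¹ * (Real.sqrt (2 * π * σ ^ 2))⁻¹
        = (2 * π * σ ^ 2)⁻¹ := by
      rw [← mul_inv, Real.mul_self_sqrt (by positivity)]
    have hexps : Real.exp (-(r * Real.cos θ - a) ^ 2 / (2 * σ ^ 2)) *
        Real.exp (-(r * Real.sin θ - b) ^ 2 / (2 * σ ^ 2))
        = Real.exp (-(r ^ 2 + (a ^ 2 + b ^ 2)) / (2 * σ ^ 2)) *
          Real.exp ((r * a / σ ^ 2) * Real.cos θ + (r * b / σ ^ 2) * Real.sin θ) := by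
      rw [← Real.exp_add, ← Real.exp_add]
      congr 1
      have h1 := sin_sq_add_cos_sq θ
      field_simp
      linear_combination (-r ^ 2) * h1
    calc r * ((Real.sqrt (2 * π * σ ^ 2))⁻¹ * Real.exp (-(r * Real.cos θ - a) ^ 2 / (2 * σ ^ 2)) *
          ((Real.sqrt (2 * π * σ ^ 2))⁻¹ * Real.exp (-(r * Real.sin θ - b) ^ 2 / (2 * σ ^ 2))))
        = r * ((Real.sqrt (2 * π * σ ^ 2))⁻¹ * (Real.sqrt (2 * π * σ ^ 2))⁻¹) *
          (Real.exp (-(r * Real.cos θ - a) ^ 2 / (2 * σ ^ 2)) *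
            Real.exp (-(r * Real.sin θ - b) ^ 2 / (2 * σ ^ 2))) := by ring
      _ = _ := by rw [hconst, hexps]; ring
  simp_rw [hpt]
  rw [intervalIntegral.integral_const_mul, integral_exp_cos_add_sin]
  have hsq : Real.sqrt ((r * a / σ ^ 2) ^ 2 + (r * b / σ ^ 2) ^ 2)
      = Real.sqrt ((a ^ 2 + b ^ 2) * r ^ 2) / σ ^ 2 := by
    have : (r * a / σ ^ 2) ^ 2 + (r * b / σ ^ 2) ^ 2
        = ((a ^ 2 + b ^ 2) * r ^ 2) / (σ ^ 2) ^ 2 := by ring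
    rw [this, Real.sqrt_div (by positivity : (0:ℝ) ≤ (a ^ 2 + b ^ 2) * r ^ 2),
      Real.sqrt_sq hvpos.le]
  rw [hsq, ncDens]
  have hπ : (0:ℝ) < π := pi_pos
  field_simp
  ring

lemma inner_theta (a b σ : ℝ) (hσ : 0 < σ) (A : Set ℝ) (r : ℝ) (hr : r ∈ Ioi (0:ℝ)) :
    ∫⁻ θ in Ioo (-π) π, ENNReal.ofReal r *
      ((fun p : ℝ × ℝ => p.1 ^ 2 + p.2 ^ 2) ⁻¹' A).indicator
        (fun p => gaussianPDF a (σ ^ 2).toNNReal p.1 * gaussianPDF b (σ ^ 2).toNNReal p.2)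
        (r * Real.cos θ, r * Real.sin θ)
    = A.indicator (fun s => ENNReal.ofReal (2 * r * ncDens a b σ s)) (r ^ 2) := by
  rw [mem_Ioi] at hr
  have hT : ∀ θ : ℝ, (r * Real.cos θ) ^ 2 + (r * Real.sin θ) ^ 2 = r ^ 2 := by
    intro θ; linear_combination r ^ 2 * (sin_sq_add_cos_sq θ)
  by_cases hA : r ^ 2 ∈ A
  · rw [Set.indicator_of_mem hA]
    have hmem : ∀ θ : ℝ, ((r * Real.cos θ, r * Real.sin θ) : ℝ × ℝ)
        ∈ (fun p : ℝ × ℝ => p.1 ^ 2 + p.2 ^ 2) ⁻¹' A := by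
      intro θ; rw [Set.mem_preimage]; simpa [hT θ] using hA
    have hint : ∀ θ : ℝ, ENNReal.ofReal r *
        ((fun p : ℝ × ℝ => p.1 ^ 2 + p.2 ^ 2) ⁻¹' A).indicator
          (fun p => gaussianPDF a (σ ^ 2).toNNReal p.1 * gaussianPDF b (σ ^ 2).toNNReal p.2)
          (r * Real.cos θ, r * Real.sin θ)
        = ENNReal.ofReal (r * (gaussianPDFReal a (σ ^ 2).toNNReal (r * Real.cos θ) *
            gaussianPDFReal b (σ ^ 2).toNNReal (r * Real.sin θ))) := by
      intro θ
      rw [Set.indicator_of_mem (hmem θ)]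
      simp only [gaussianPDF]
      rw [← ENNReal.ofReal_mul (gaussianPDFReal_nonneg _ _ _),
        ← ENNReal.ofReal_mul hr.le]
    simp_rw [hint]
    have hcont : Continuous (fun θ : ℝ => r * (gaussianPDFReal a (σ ^ 2).toNNReal (r * Real.cos θ) *
        gaussianPDFReal b (σ ^ 2).toNNReal (r * Real.sin θ))) := by
      unfold gaussianPDFReal
      fun_prop
    rw [← ofReal_integral_eq_lintegral_ofReal
      ((hcont.integrableOn_Icc).mono_set Set.Ioo_subset_Icc_self)
      (ae_of_all _ (fun θ => mul_nonneg hr.le (mul_nonneg (gaussianPDFReal_nonneg _ _ _)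
        (gaussianPDFReal_nonneg _ _ _))))]
    rw [← integral_Ioc_eq_integral_Ioo, ← intervalIntegral.integral_of_le (by linarith [pi_pos]),
      radial_integral a b σ hσ r hr]
  · rw [Set.indicator_of_notMem hA]
    have hmem : ∀ θ : ℝ, ((r * Real.cos θ, r * Real.sin θ) : ℝ × ℝ)
        ∉ (fun p : ℝ × ℝ => p.1 ^ 2 + p.2 ^ 2) ⁻¹' A := by
      intro θ h
      rw [Set.mem_preimage] at h
      exact hA (by simpa [hT θ] using h)
    have : ∀ θ : ℝ, ENNReal.ofReal r *
        ((fun p : ℝ × ℝ => p.1 ^ 2 + p.2 ^ 2) ⁻¹' A).indicator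
          (fun p => gaussianPDF a (σ ^ 2).toNNReal p.1 * gaussianPDF b (σ ^ 2).toNNReal p.2)
          (r * Real.cos θ, r * Real.sin θ) = 0 := by
      intro θ
      rw [Set.indicator_of_notMem (hmem θ), mul_zero]
    simp_rw [this, lintegral_zero]

/-- The pushforward of `N(a,σ²) ⊗ N(b,σ²)` under `(x,y) ↦ x² + y²` is the scaled
noncentral χ²(2) distribution, with Lebesgue density
`s ↦ (1/(2σ²)) e^{-(s+a²+b²)/(2σ²)} I₀(√((a²+b²)s)/σ²)` for `s ≥ 0` (and `0` for `s < 0`). -/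
theorem noncentral_chiSq_two_density (a b σ : ℝ) (hσ : 0 < σ) :
    Measure.map (fun p : ℝ × ℝ => p.1 ^ 2 + p.2 ^ 2)
        ((gaussianReal a (σ ^ 2).toNNReal).prod (gaussianReal b (σ ^ 2).toNNReal)) =
      volume.withDensity (fun s =>
        ENNReal.ofReal (if 0 ≤ s then
          (1 / (2 * σ ^ 2)) * Real.exp (-(s + a ^ 2 + b ^ 2) / (2 * σ ^ 2)) *
            besselI0 (Real.sqrt ((a ^ 2 + b ^ 2) * s) / σ ^ 2)
        else 0)) := by
  have hvne : (σ ^ 2).toNNReal ≠ 0 := by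
    refine (Real.toNNReal_pos.mpr (by positivity)).ne'
  have hTm : Measurable (fun p : ℝ × ℝ => p.1 ^ 2 + p.2 ^ 2) :=
    (measurable_fst.pow_const 2).add (measurable_snd.pow_const 2)
  have hFm : Measurable (fun p : ℝ × ℝ =>
      gaussianPDF a (σ ^ 2).toNNReal p.1 * gaussianPDF b (σ ^ 2).toNNReal p.2) :=
    ((measurable_gaussianPDF _ _).comp measurable_fst).mul
      ((measurable_gaussianPDF _ _).comp measurable_snd)
  ext A hA
  rw [Measure.map_apply hTm hA, gaussian_prod_withDensity a b _ hvne,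
    withDensity_apply _ (hTm hA), withDensity_apply _ hA]
  set T := fun p : ℝ × ℝ => p.1 ^ 2 + p.2 ^ 2 with hTdef
  set F := fun p : ℝ × ℝ =>
    gaussianPDF a (σ ^ 2).toNNReal p.1 * gaussianPDF b (σ ^ 2).toNNReal p.2 with hFdef
  -- LHS
  have lhs_eq : ∫⁻ p in T ⁻¹' A, F p ∂(volume.prod volume)
      = ∫⁻ r in Ioi (0:ℝ), A.indicator
          (fun s => ENNReal.ofReal (2 * r * ncDens a b σ s)) (r ^ 2) := by
    have hprodvol : (volume.prod volume : Measure (ℝ × ℝ)) = volume := (Measure.volume_eq_prod ℝ ℝ).symm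
    rw [hprodvol, ← lintegral_indicator (hTm hA), ← lintegral_polarCoord_symm,
      polarCoord_target]
    have hpt : ∀ p : ℝ × ℝ, ENNReal.ofReal p.1 * ((T ⁻¹' A).indicator F) (polarCoord.symm p)
        = ENNReal.ofReal p.1 * ((T ⁻¹' A).indicator F) (p.1 * Real.cos p.2, p.1 * Real.sin p.2) := by
      intro p; rw [polarCoord_symm_apply]
    simp_rw [hpt]
    have hmeasint : Measurable (fun z : ℝ × ℝ => ENNReal.ofReal z.1 *
        (T ⁻¹' A).indicator F (z.1 * Real.cos z.2, z.1 * Real.sin z.2)) :=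
      measurable_fst.ennreal_ofReal.mul
        ((hFm.indicator (hTm hA)).comp
          ((measurable_fst.mul (Real.measurable_cos.comp measurable_snd)).prodMk
            (measurable_fst.mul (Real.measurable_sin.comp measurable_snd))))
    rw [Measure.volume_eq_prod, ← Measure.prod_restrict,
      lintegral_prod (fun z : ℝ × ℝ => ENNReal.ofReal z.1 *
        (T ⁻¹' A).indicator F (z.1 * Real.cos z.2, z.1 * Real.sin z.2)) hmeasint.aemeasurable]
    exact setLIntegral_congr_fun_ae measurableSet_Ioi
      (ae_of_all _ (fun r hr => inner_theta a b σ hσ A r hr))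
  -- RHS
  have rhs_eq : ∫⁻ s in A, ENNReal.ofReal (if 0 ≤ s then
        (1 / (2 * σ ^ 2)) * Real.exp (-(s + a ^ 2 + b ^ 2) / (2 * σ ^ 2)) *
          besselI0 (Real.sqrt ((a ^ 2 + b ^ 2) * s) / σ ^ 2) else 0)
      = ∫⁻ r in Ioi (0:ℝ), A.indicator
          (fun s => ENNReal.ofReal (2 * r * ncDens a b σ s)) (r ^ 2) := by
    have step1 : ∫⁻ s in A, ENNReal.ofReal (if 0 ≤ s then
        (1 / (2 * σ ^ 2)) * Real.exp (-(s + a ^ 2 + b ^ 2) / (2 * σ ^ 2)) *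
          besselI0 (Real.sqrt ((a ^ 2 + b ^ 2) * s) / σ ^ 2) else 0)
        = ∫⁻ s in A, (Ioi (0:ℝ)).indicator (fun s => ENNReal.ofReal (ncDens a b σ s)) s := by
      apply lintegral_congr_ae
      apply ae_restrict_of_ae
      have hsub : {s : ℝ | ¬ (ENNReal.ofReal (if 0 ≤ s then
          (1 / (2 * σ ^ 2)) * Real.exp (-(s + a ^ 2 + b ^ 2) / (2 * σ ^ 2)) *
            besselI0 (Real.sqrt ((a ^ 2 + b ^ 2) * s) / σ ^ 2) else 0)
          = (Ioi (0:ℝ)).indicator (fun s => ENNReal.ofReal (ncDens a b σ s)) s)} ⊆ {0} := by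
        intro s hs
        simp only [Set.mem_setOf_eq] at hs
        rw [Set.mem_singleton_iff]
        by_contra h0
        apply hs
        rcases lt_trichotomy s 0 with h | h | h
        · rw [if_neg (not_le.mpr h), Set.indicator_of_notMem
            (by simp only [mem_Ioi, not_lt]; exact h.le)]
          exact ENNReal.ofReal_zero
        · exact absurd h h0
        · rw [if_pos h.le, Set.indicator_of_mem (mem_Ioi.mpr h)]
          rfl
      exact ae_iff.mpr (measure_mono_null hsub (measure_singleton 0))
    rw [step1, lintegral_indicator measurableSet_Ioi, Measure.restrict_restrict measurableSet_Ioi]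
    have himg : (fun r : ℝ => r ^ 2) '' Ioi 0 = Ioi (0:ℝ) := by
      ext s
      constructor
      · rintro ⟨r, hr, rfl⟩
        exact mem_Ioi.mpr (pow_pos (mem_Ioi.mp hr) 2)
      · intro hs
        exact ⟨Real.sqrt s, mem_Ioi.mpr (Real.sqrt_pos.mpr hs), by simp only []; exact Real.sq_sqrt (le_of_lt hs)⟩
    have hinj : Set.InjOn (fun r : ℝ => r ^ 2) (Ioi 0) := by
      intro x hx y hy h
      rw [mem_Ioi] at hx hy
      have h' : x ^ 2 = y ^ 2 := h
      nlinarith [h', hx, hy, sq_nonneg (x - y), sq_nonneg (x + y)]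
    have hderiv : ∀ x ∈ Ioi (0:ℝ), HasDerivWithinAt (fun r : ℝ => r ^ 2) (2 * x) (Ioi 0) x := by
      intro x _
      have := (hasDerivAt_pow 2 x).hasDerivWithinAt (s := Ioi 0)
      norm_num at this
      exact this
    have step2 : ∫⁻ s in Ioi (0:ℝ) ∩ A, ENNReal.ofReal (ncDens a b σ s)
        = ∫⁻ s in Ioi (0:ℝ), A.indicator (fun s => ENNReal.ofReal (ncDens a b σ s)) s := by
      rw [lintegral_indicator hA, Measure.restrict_restrict hA, Set.inter_comm]
    rw [step2]
    conv_lhs => rw [← himg]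
    rw [lintegral_image_eq_lintegral_abs_deriv_mul' measurableSet_Ioi hderiv hinj]
    apply setLIntegral_congr_fun_ae measurableSet_Ioi
    filter_upwards with r hr
    rw [mem_Ioi] at hr
    rw [abs_of_pos (by linarith)]
    by_cases hA2 : r ^ 2 ∈ A
    · rw [Set.indicator_of_mem hA2, Set.indicator_of_mem hA2,
        ← ENNReal.ofReal_mul (by positivity), mul_assoc]
    · rw [Set.indicator_of_notMem hA2, Set.indicator_of_notMem hA2, mul_zero]
  rw [lhs_eq, rhs_eq]
end

section
/- Let p > 0, c ≥ 0, and t ≥ 0. Then ∫_t^∞ exp(−p·s) · I₀(c·√s) ds = (1/p) · exp(c²/(4p)) · Q₁(c/√(2p), √(2pt)). -/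
open MeasureTheory

/-- The first-order Marcum Q-function, `Q₁(α, β) = ∫_β^∞ x e^{-(x²+α²)/2} I₀(αx) dx`. -/
noncomputable def marcumQ1 (α β : ℝ) : ℝ :=
  ∫ x in Set.Ici β, x * Real.exp (-(x ^ 2 + α ^ 2) / 2) * besselI0 (α * x)

/-- Incomplete Laplace transform of `I₀`: for `p > 0`, `c ≥ 0`, `t ≥ 0`,
`∫_t^∞ e^{-ps} I₀(c√s) ds = (1/p) e^{c²/(4p)} Q₁(c/√(2p), √(2pt))`. -/
theorem integral_exp_mul_besselI0 (p c t : ℝ) (hp : 0 < p) (hc : 0 ≤ c) (ht : 0 ≤ t) :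
    ∫ s in Set.Ici t, Real.exp (-p * s) * besselI0 (c * Real.sqrt s) =
      (1 / p) * Real.exp (c ^ 2 / (4 * p)) *
        marcumQ1 (c / Real.sqrt (2 * p)) (Real.sqrt (2 * p * t)) := by
  have h2p : (0:ℝ) < 2 * p := by linarith
  set α := c / Real.sqrt (2 * p) with hα
  set β := Real.sqrt (2 * p * t) with hβdef
  have hβ : 0 ≤ β := Real.sqrt_nonneg _
  have hβ2 : β ^ 2 = 2 * p * t := Real.sq_sqrt (by positivity)
  -- image of Ioi β under x ↦ x²/(2p) is Ioi t
  have himg : (fun x : ℝ => x ^ 2 / (2 * p)) '' Set.Ioi β = Set.Ioi t := by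
    ext x
    constructor
    · rintro ⟨y, hy, rfl⟩
      have hy' : β < y := hy
      have : β ^ 2 < y ^ 2 := by nlinarith
      have : 2 * p * t < y ^ 2 := by rw [← hβ2]; exact this
      simpa [Set.mem_Ioi] using by
        rw [lt_div_iff₀ h2p]; nlinarith
    · intro hx
      have hx' : t < x := hx
      refine ⟨Real.sqrt (2 * p * x), ?_, ?_⟩
      · exact Real.sqrt_lt_sqrt (by positivity) (by nlinarith)
      · show Real.sqrt (2 * p * x) ^ 2 / (2 * p) = x
        rw [Real.sq_sqrt (by nlinarith : (0:ℝ) ≤ 2 * p * x)]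
        field_simp
  have hsα : Real.sqrt (2 * p) * α = c := by
    rw [hα]; field_simp
  have hα2 : α ^ 2 = c ^ 2 / (2 * p) := by
    rw [hα, div_pow, Real.sq_sqrt h2p.le]
  unfold marcumQ1
  rw [integral_Ici_eq_integral_Ioi, integral_Ici_eq_integral_Ioi, ← himg,
    MeasureTheory.integral_image_eq_integral_abs_deriv_smul measurableSet_Ioi
      (f' := fun x => x / p)
      (fun x _ => by
        have : HasDerivAt (fun x : ℝ => x ^ 2 / (2 * p)) (x / p) x := by
          have := (hasDerivAt_pow 2 x).div_const (2 * p)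
          simpa [mul_comm, mul_div_assoc] using this.congr_deriv (by ring)
        exact this.hasDerivWithinAt)
      (fun x hx y hy hxy => by
        have hx0 : 0 < x := lt_of_le_of_lt hβ hx
        have hy0 : 0 < y := lt_of_le_of_lt hβ hy
        field_simp at hxy
        nlinarith [hxy, sq_nonneg (x - y), sq_nonneg (x + y)])]
  rw [← integral_const_mul]
  apply setIntegral_congr_fun measurableSet_Ioi
  intro x hx
  have hx0 : 0 < x := lt_of_le_of_lt hβ hx
  have hsq : Real.sqrt (x ^ 2 / (2 * p)) = x / Real.sqrt (2 * p) := by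
    rw [Real.sqrt_div (sq_nonneg x), Real.sqrt_sq hx0.le]
  have harg : c * (x / Real.sqrt (2 * p)) = α * x := by rw [hα]; ring
  simp only [smul_eq_mul, hsq, harg, abs_of_pos (div_pos hx0 hp)]
  have hexp : Real.exp (-p * (x ^ 2 / (2 * p))) =
      Real.exp (c ^ 2 / (4 * p)) * Real.exp (-(x ^ 2 + α ^ 2) / 2) := by
    rw [← Real.exp_add]
    congr 1
    rw [hα2]
    field_simp
    ring
  rw [hexp]
  ring
end

section
/- Let a, b ∈ ℝ, σ₁ > 0, σ₂ > 0, and t ≥ 0. Then ∫_0^∞ (1/(2σ₁²)) · exp(−(t + u + a² + b²)/(2σ₁²)) · I₀(√((a² + b²)(t + u))/σ₁²) · (1/(2σ₂²)) · exp(−u/(2σ₂²)) du = (1/(2(σ₁² + σ₂²))) · exp(t/(2σ₂²)) · exp(−(a² + b²)/(2(σ₁² + σ₂²))) · Q₁((√(a² + b²)·σ₂)/(σ₁·√(σ₁² + σ₂²)), √(t(σ₁² + σ₂²))/(σ₁σ₂)). -/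
open MeasureTheory

/-- Convolution integral giving the nonnegative-branch density of the difference
`T = T₁ - T₂` between a scaled noncentral χ²(2) variable (scale `σ₁²`, noncentrality
`a²+b²`) and an independent exponential variable with mean `2σ₂²`: for `t ≥ 0`,
the density at `t` equals the stated Marcum-Q expression. -/
theorem density_diff_chiSq_marcumQ (a b σ₁ σ₂ t : ℝ) (hσ₁ : 0 < σ₁) (hσ₂ : 0 < σ₂)
    (ht : 0 ≤ t) :
    ∫ u in Set.Ici (0 : ℝ),
        (1 / (2 * σ₁ ^ 2)) * Real.exp (-(t + u + a ^ 2 + b ^ 2) / (2 * σ₁ ^ 2)) *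
          besselI0 (Real.sqrt ((a ^ 2 + b ^ 2) * (t + u)) / σ₁ ^ 2) *
          ((1 / (2 * σ₂ ^ 2)) * Real.exp (-u / (2 * σ₂ ^ 2))) =
      (1 / (2 * (σ₁ ^ 2 + σ₂ ^ 2))) * Real.exp (t / (2 * σ₂ ^ 2)) *
        Real.exp (-(a ^ 2 + b ^ 2) / (2 * (σ₁ ^ 2 + σ₂ ^ 2))) *
        marcumQ1 ((Real.sqrt (a ^ 2 + b ^ 2) * σ₂) / (σ₁ * Real.sqrt (σ₁ ^ 2 + σ₂ ^ 2)))
          (Real.sqrt (t * (σ₁ ^ 2 + σ₂ ^ 2)) / (σ₁ * σ₂)) := by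
  have hS0 : (0:ℝ) < σ₁ ^ 2 + σ₂ ^ 2 := by positivity
  set S : ℝ := σ₁ ^ 2 + σ₂ ^ 2 with hSdef
  set k : ℝ := σ₁ ^ 2 * σ₂ ^ 2 / S with hkdef
  have hk0 : 0 < k := by positivity
  set β : ℝ := Real.sqrt (t * S) / (σ₁ * σ₂) with hβdef
  have hβ0 : 0 ≤ β := by positivity
  have hβsq : k * β ^ 2 = t := by
    rw [hβdef, div_pow, Real.sq_sqrt (by positivity)]
    field_simp [hkdef]
    linear_combination t * div_mul_cancel₀ (σ₁ ^ 2 * σ₂ ^ 2) hS0.ne' + t * S * hkdef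
  set α : ℝ := Real.sqrt (a ^ 2 + b ^ 2) * σ₂ / (σ₁ * Real.sqrt S) with hαdef
  have hα2 : α ^ 2 = (a ^ 2 + b ^ 2) * σ₂ ^ 2 / (σ₁ ^ 2 * S) := by
    rw [hαdef, div_pow, mul_pow, mul_pow, Real.sq_sqrt (by positivity),
      Real.sq_sqrt hS0.le]
  have hsqrtk : Real.sqrt k = σ₁ * σ₂ / Real.sqrt S := by
    rw [hkdef, show σ₁ ^ 2 * σ₂ ^ 2 = (σ₁ * σ₂) ^ 2 by ring,
      Real.sqrt_div (by positivity), Real.sqrt_sq (by positivity)]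
  -- the change of variables map
  have himg : (fun x => k * x ^ 2 - t) '' Set.Ioi β = Set.Ioi (0:ℝ) := by
    ext y
    simp only [Set.mem_image, Set.mem_Ioi]
    constructor
    · rintro ⟨x, hx, rfl⟩
      have h1 : β ^ 2 < x ^ 2 := by nlinarith
      nlinarith
    · intro hy
      refine ⟨Real.sqrt ((y + t) / k), ?_, ?_⟩
      · have h1 : β = Real.sqrt (β ^ 2) := (Real.sqrt_sq hβ0).symm
        rw [h1]
        apply Real.sqrt_lt_sqrt (by positivity)
        rw [lt_div_iff₀ hk0]
        nlinarith
      · rw [Real.sq_sqrt (div_nonneg (by linarith) hk0.le)]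
        field_simp
        ring
  have hderiv : ∀ x ∈ Set.Ioi β, HasDerivWithinAt (fun x => k * x ^ 2 - t)
      (2 * k * x) (Set.Ioi β) x := by
    intro x _
    have h := (((hasDerivAt_pow 2 x).const_mul k).sub_const t).hasDerivWithinAt
      (s := Set.Ioi β)
    refine h.congr_deriv ?_
    push_cast
    ring
  have hinj : Set.InjOn (fun x => k * x ^ 2 - t) (Set.Ioi β) := by
    intro x hx y hy h
    simp only [Set.mem_Ioi] at hx hy
    have hx2 : k * x ^ 2 = k * y ^ 2 := by dsimp only at h; linarith
    have hx2' : x ^ 2 = y ^ 2 := mul_left_cancel₀ hk0.ne' hx2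
    have h3 : Real.sqrt (x ^ 2) = Real.sqrt (y ^ 2) := by rw [hx2']
    rwa [Real.sqrt_sq (by linarith), Real.sqrt_sq (by linarith)] at h3
  have harg : ∀ x : ℝ, 0 ≤ x →
      Real.sqrt ((a ^ 2 + b ^ 2) * (k * x ^ 2)) / σ₁ ^ 2 = α * x := by
    intro x hx
    rw [Real.sqrt_mul (by positivity), Real.sqrt_mul hk0.le, Real.sqrt_sq hx, hsqrtk,
      hαdef]
    have h1 : Real.sqrt S ≠ 0 := by positivity
    field_simp
  rw [MeasureTheory.integral_Ici_eq_integral_Ioi, ← himg,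
    MeasureTheory.integral_image_eq_integral_abs_deriv_smul measurableSet_Ioi hderiv hinj]
  unfold marcumQ1
  rw [MeasureTheory.integral_Ici_eq_integral_Ioi, ← MeasureTheory.integral_const_mul]
  apply MeasureTheory.setIntegral_congr_fun measurableSet_Ioi
  intro x hx
  simp only [Set.mem_Ioi] at hx
  have hx0 : 0 < x := lt_of_le_of_lt hβ0 hx
  simp only [smul_eq_mul]
  rw [show t + (k * x ^ 2 - t) = k * x ^ 2 from by ring, harg x hx0.le,
    abs_of_pos (by positivity : (0:ℝ) < 2 * k * x)]
  have hE : -(k * x ^ 2 + a ^ 2 + b ^ 2) / (2 * σ₁ ^ 2) +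
      -(k * x ^ 2 - t) / (2 * σ₂ ^ 2) =
      t / (2 * σ₂ ^ 2) + -(a ^ 2 + b ^ 2) / (2 * S) + -(x ^ 2 + α ^ 2) / 2 := by
    rw [hα2, hkdef]
    field_simp
    ring
  calc 2 * k * x *
      (1 / (2 * σ₁ ^ 2) * Real.exp (-(k * x ^ 2 + a ^ 2 + b ^ 2) / (2 * σ₁ ^ 2)) *
        besselI0 (α * x) *
        (1 / (2 * σ₂ ^ 2) * Real.exp (-(k * x ^ 2 - t) / (2 * σ₂ ^ 2))))
      = 2 * k * x * (1 / (2 * σ₁ ^ 2)) * (1 / (2 * σ₂ ^ 2)) *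
        Real.exp (-(k * x ^ 2 + a ^ 2 + b ^ 2) / (2 * σ₁ ^ 2) +
          -(k * x ^ 2 - t) / (2 * σ₂ ^ 2)) * besselI0 (α * x) := by
        rw [Real.exp_add]; ring
    _ = 1 / (2 * S) * Real.exp (t / (2 * σ₂ ^ 2)) *
        Real.exp (-(a ^ 2 + b ^ 2) / (2 * S)) *
        (x * Real.exp (-(x ^ 2 + α ^ 2) / 2) * besselI0 (α * x)) := by
        rw [hE, Real.exp_add, Real.exp_add, hkdef]
        field_simp
end
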